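/- Let q be an odd prime power and d ∈ F_q with d ≠ 0. Set h = (4X⁴ − 12d²X² + 8d³X − d⁴)/(2X(X − d)(2X − d)) ∈ F_q(X). Then the extension F_q(X)/F_q(h) is Galois of degree 4; its Galois group is the cyclic group of order 4 generated by the F_q-algebra automorphism of F_q(X) sending X to d²/(2(d − X)). -/

import Mathlib

open Polynomial

set_option synthInstance.maxHeartbeats 1000000
set_option maxHeartbeats 3200000

/-- An `F`-algebra automorphism of `RatFunc F` fixing `X` is the identity. -/
theorem ratFunc_algEquiv_eq_one' {F : Type*} [Field F] (τ : RatFunc F ≃ₐ[F] RatFunc F)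
    (hτ : τ RatFunc.X = RatFunc.X) : τ = 1 := by
  have key : ∀ p : Polynomial F, τ (algebraMap (Polynomial F) (RatFunc F) p)
      = algebraMap (Polynomial F) (RatFunc F) p := by
    intro p
    have hcomp : τ.toAlgHom.comp (IsScalarTower.toAlgHom F (Polynomial F) (RatFunc F))
        = IsScalarTower.toAlgHom F (Polynomial F) (RatFunc F) :=
      Polynomial.algHom_ext (by simpa [RatFunc.algebraMap_X] using hτ)
    simpa using DFunLike.congr_fun hcomp p
  have hring : (τ : RatFunc F →+* RatFunc F) = RingHom.id (RatFunc F) :=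
    IsLocalization.ringHom_ext (nonZeroDivisors (Polynomial F))
      (RingHom.ext fun p => by simpa using key p)
  exact AlgEquiv.ext fun x => RingHom.congr_fun hring x

/-- Let `q` be odd, `d ∈ F_q*`, and
`h = (4X⁴ - 12d²X² + 8d³X - d⁴)/(2X(X - d)(2X - d)) ∈ F_q(X)`.  Then the extension
`F_q(X)/F_q(h)` is Galois of degree `4`, and its Galois group is the cyclic group of
order `4` generated by the `F_q`-algebra automorphism `σ` of `F_q(X)` with
`σ(X) = d²/(2(d - X))`: `σ` has order `4` and the fixed field of `⟨σ⟩` is `F_q(h)`. -/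
theorem stmt14 {F : Type*} [Field F] [Fintype F] (hodd : Odd (Fintype.card F))
    (d : F) (hd : d ≠ 0)
    (σ : RatFunc F ≃ₐ[F] RatFunc F)
    (hσ : σ RatFunc.X = algebraMap F (RatFunc F) (d ^ 2) /
        (algebraMap F (RatFunc F) 2 * (algebraMap F (RatFunc F) d - RatFunc.X)))
    (h : RatFunc F)
    (hh : h = (algebraMap F (RatFunc F) 4 * RatFunc.X ^ 4
          - algebraMap F (RatFunc F) (12 * d ^ 2) * RatFunc.X ^ 2
          + algebraMap F (RatFunc F) (8 * d ^ 3) * RatFunc.X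
          - algebraMap F (RatFunc F) (d ^ 4)) /
        (algebraMap F (RatFunc F) 2 * RatFunc.X * (RatFunc.X - algebraMap F (RatFunc F) d)
          * (algebraMap F (RatFunc F) 2 * RatFunc.X - algebraMap F (RatFunc F) d))) :
    IsGalois (IntermediateField.adjoin F {h}) (RatFunc F) ∧
    Module.finrank (IntermediateField.adjoin F {h}) (RatFunc F) = 4 ∧
    orderOf σ = 4 ∧
    IntermediateField.fixedField (Subgroup.zpowers σ) = IntermediateField.adjoin F {h} := by
  -- odd characteristic
  have h2 : (2 : F) ≠ 0 := by
    intro hc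
    have hchar : ringChar F = 2 :=
      CharP.ringChar_of_prime_eq_zero Nat.prime_two (by exact_mod_cast hc)
    have heven := FiniteField.even_card_of_char_two hchar
    rw [Nat.odd_iff] at hodd
    omega
  -- normalize to `RatFunc.C` form
  rw [RatFunc.algebraMap_eq_C] at hσ hh
  simp only [map_ofNat, map_pow, map_mul] at hσ hh
  have hσC : ∀ a : F, σ (RatFunc.C a) = RatFunc.C a := by
    intro a
    have := σ.commutes a
    rwa [RatFunc.algebraMap_eq_C] at this
  have hC0 : ∀ a : F, a ≠ 0 → RatFunc.C a ≠ 0 := by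
    intro a ha hc
    exact ha (by simpa using RatFunc.C.injective (by simpa using hc))
  have h2' : (2 : RatFunc F) ≠ 0 := by
    have := hC0 2 h2; rwa [map_ofNat] at this
  have hCd : RatFunc.C d ≠ 0 := hC0 d hd
  have hX : (RatFunc.X : RatFunc F) ≠ 0 := RatFunc.X_ne_zero
  have hlin : ∀ a b : F, b ≠ 0 → RatFunc.C a - RatFunc.C b * RatFunc.X ≠ 0 := by
    intro a b hb
    have hp : (C a - C b * X : F[X]) ≠ 0 := by
      intro hc
      have := congrArg (fun p => Polynomial.coeff p 1) hc
      simp [coeff_one] at this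
      exact hb this
    have := RatFunc.algebraMap_ne_zero hp
    simpa [RatFunc.algebraMap_X, RatFunc.algebraMap_C] using this
  have hXd : RatFunc.C d - RatFunc.X ≠ 0 := by simpa using hlin d 1 one_ne_zero
  have hXd' : RatFunc.X - RatFunc.C d ≠ 0 := fun hc => hXd (by linear_combination -hc)
  have hd2X : RatFunc.C d - 2 * RatFunc.X ≠ 0 := by
    have := hlin d 2 h2; rwa [map_ofNat] at this
  have h2Xd : 2 * RatFunc.X - RatFunc.C d ≠ 0 := fun hc => hd2X (by linear_combination -hc)
  have hden : (2 : RatFunc F) * (RatFunc.C d - RatFunc.X) ≠ 0 := mul_ne_zero h2' hXd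
  -- single-fraction forms of the recurring compound subexpressions
  have r0 : RatFunc.C d - RatFunc.C d ^ 2 / (2 * (RatFunc.C d - RatFunc.X))
      = RatFunc.C d * (RatFunc.C d - 2 * RatFunc.X) / (2 * (RatFunc.C d - RatFunc.X)) := by
    rw [eq_div_iff hden, sub_mul, div_mul_cancel₀ _ hden]; ring
  have r1 : RatFunc.C d ^ 2 / (2 * (RatFunc.C d - RatFunc.X)) - RatFunc.C d
      = RatFunc.C d * (2 * RatFunc.X - RatFunc.C d) / (2 * (RatFunc.C d - RatFunc.X)) := by
    rw [eq_div_iff hden, sub_mul, div_mul_cancel₀ _ hden]; ring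
  have r2 : 2 * (RatFunc.C d ^ 2 / (2 * (RatFunc.C d - RatFunc.X))) - RatFunc.C d
      = RatFunc.C d * RatFunc.X / (RatFunc.C d - RatFunc.X) := by
    rw [eq_div_iff hXd]
    field_simp
    ring
  have r3 : RatFunc.C d - 2 * (RatFunc.C d ^ 2 / (2 * (RatFunc.C d - RatFunc.X)))
      = RatFunc.C d * RatFunc.X / (RatFunc.X - RatFunc.C d) := by
    rw [eq_div_iff hXd']
    field_simp
    ring
  have hs1 : RatFunc.C d ^ 2 / (2 * (RatFunc.C d - RatFunc.X)) ≠ 0 :=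
    div_ne_zero (pow_ne_zero 2 hCd) hden
  have hs1d : RatFunc.C d ^ 2 / (2 * (RatFunc.C d - RatFunc.X)) - RatFunc.C d ≠ 0 := by
    rw [r1]; exact div_ne_zero (mul_ne_zero hCd h2Xd) hden
  have h2s1d : 2 * (RatFunc.C d ^ 2 / (2 * (RatFunc.C d - RatFunc.X))) - RatFunc.C d ≠ 0 := by
    rw [r2]; exact div_ne_zero (mul_ne_zero hCd hX) hXd
  -- the orbit of X under σ
  have e2 : σ (σ RatFunc.X) =
      RatFunc.C d * (RatFunc.C d - RatFunc.X) / (RatFunc.C d - 2 * RatFunc.X) := by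
    rw [hσ]
    simp only [map_div₀, map_mul, map_sub, map_pow, map_ofNat, hσC, hσ]
    rw [r0]
    field_simp
  have e3 : σ (σ (σ RatFunc.X)) =
      RatFunc.C d * (2 * RatFunc.X - RatFunc.C d) / (2 * RatFunc.X) := by
    rw [e2]
    simp only [map_div₀, map_mul, map_sub, map_pow, map_ofNat, hσC, hσ]
    rw [r0, r3]
    field_simp
    ring
  have e4 : σ (σ (σ (σ RatFunc.X))) = RatFunc.X := by
    rw [e3]
    simp only [map_div₀, map_mul, map_sub, map_pow, map_ofNat, hσC, hσ]
    rw [r2]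
    field_simp
  -- σ fixes h
  have eσh : σ h = h := by
    rw [hh]
    simp only [map_div₀, map_mul, map_sub, map_add, map_pow, map_ofNat, hσC, hσ]
    rw [div_eq_div_iff
      (mul_ne_zero (mul_ne_zero (mul_ne_zero h2' hs1) hs1d) h2s1d)
      (mul_ne_zero (mul_ne_zero (mul_ne_zero h2' hX) hXd') h2Xd)]
    field_simp
    ring
  -- σ has order 4
  have h4 : σ ^ 4 = 1 := by
    apply ratFunc_algEquiv_eq_one'
    have : (σ ^ 4) RatFunc.X = σ (σ (σ (σ RatFunc.X))) := by
      simp [pow_succ, AlgEquiv.mul_apply]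
    rw [this, e4]
  have hne2 : σ ^ 2 ≠ 1 := by
    intro hc
    have hEq : σ (σ RatFunc.X) = RatFunc.X := by
      have := DFunLike.congr_fun hc RatFunc.X
      simpa [pow_succ, AlgEquiv.mul_apply] using this
    rw [e2, div_eq_iff hd2X] at hEq
    have hpoly : (Polynomial.C d * (Polynomial.C d - X)
        - X * (Polynomial.C d - 2 * X) : F[X]) ≠ 0 := by
      intro hc2
      have := congrArg (fun p => Polynomial.coeff p 2) hc2
      simp [coeff_X, mul_comm] at this
      exact h2 (by linear_combination this)
    have := RatFunc.algebraMap_ne_zero hpoly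
    rw [map_sub, map_mul, map_mul, map_sub, map_sub, map_mul] at this
    simp only [RatFunc.algebraMap_C, RatFunc.algebraMap_X, map_ofNat] at this
    exact this (by rw [sub_eq_zero]; exact hEq)
  have horder : orderOf σ = 4 := by
    haveI : Fact (Nat.Prime 2) := ⟨Nat.prime_two⟩
    have : orderOf σ = 2 ^ (1 + 1) :=
      orderOf_eq_prime_pow (n := 1) (by simpa using hne2) (by norm_num; exact h4)
    simpa using this
  -- the fixed field of ⟨σ⟩
  have hfin : IsOfFinOrder σ := by
    rw [← orderOf_pos_iff, horder]; norm_num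
  haveI : Finite (Subgroup.zpowers σ) := hfin.finite_zpowers
  haveI := Fintype.ofFinite ↥(Subgroup.zpowers σ)
  have hcard : Fintype.card ↥(Subgroup.zpowers σ) = 4 := by
    rw [← Nat.card_eq_fintype_card, Nat.card_zpowers, horder]
  have hGal : IsGalois (IntermediateField.fixedField (Subgroup.zpowers σ)) (RatFunc F) :=
    IsGalois.of_fixed_field (RatFunc F) _
  have hLrank : Module.finrank (IntermediateField.fixedField (Subgroup.zpowers σ)) (RatFunc F)
      = 4 :=
    (FixedPoints.finrank_eq_card (Subgroup.zpowers σ) (RatFunc F)).trans hcard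
  have hfixle : IntermediateField.adjoin F {h}
      ≤ IntermediateField.fixedField (Subgroup.zpowers σ) := by
    rw [IntermediateField.adjoin_le_iff]
    intro x hx
    rw [Set.mem_singleton_iff] at hx
    rw [hx]
    have hnat : ∀ n : ℕ, (σ ^ n) h = h := by
      intro n
      induction n with
      | zero => simp
      | succ k ih => rw [pow_succ, AlgEquiv.mul_apply, eσh, ih]
    rintro ⟨g, hg⟩
    obtain ⟨n, rfl⟩ := hg
    show (σ ^ n) h = h
    cases n with
    | ofNat m => rw [Int.ofNat_eq_coe, zpow_natCast]; exact hnat m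
    | negSucc m =>
      rw [zpow_negSucc]
      exact (AlgEquiv.symm_apply_eq _).mpr (hnat (m + 1)).symm
  -- the degree of RatFunc F over F(h) is at most 4
  set K := IntermediateField.adjoin F {h} with hKdef
  have hmem : h ∈ K := IntermediateField.mem_adjoin_simple_self F h
  set hK : K := ⟨h, hmem⟩ with hhK
  set d' : K := algebraMap F K d with hd'
  set P : Polynomial K := C 4 * X ^ 4 - C (4 * hK) * X ^ 3 + C (6 * d' * hK - 12 * d' ^ 2) * X ^ 2
      + C (8 * d' ^ 3 - 2 * d' ^ 2 * hK) * X - C (d' ^ 4) with hP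
  have h4F : (4 : F) ≠ 0 := by
    intro hc
    have h22 : (2 : F) * 2 = 0 := by linear_combination hc
    rcases mul_eq_zero.mp h22 with hce | hce <;> exact h2 hce
  have h4K : (4 : K) ≠ 0 := by
    intro hc
    apply h4F
    have : algebraMap F K 4 = 0 := by rw [map_ofNat]; exact_mod_cast hc
    exact (algebraMap F K).injective (by simpa using this)
  have hP0 : P ≠ 0 := by
    intro hc
    apply h4K
    have := congrArg (fun p => Polynomial.coeff p 4) hc
    simp only [hP, coeff_add, coeff_sub, coeff_C_mul, coeff_X_pow, coeff_C, coeff_X,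
      coeff_zero, mul_ite, mul_one, mul_zero] at this
    norm_num at this
    exact this
  have haeval : Polynomial.aeval (RatFunc.X : RatFunc F) P = 0 := by
    have hcoe : algebraMap K (RatFunc F) hK = h := rfl
    have hcoed : algebraMap K (RatFunc F) d' = RatFunc.C d := by
      rw [hd', ← IsScalarTower.algebraMap_apply, RatFunc.algebraMap_eq_C]
    simp only [hP, map_add, map_sub, map_mul, map_pow, aeval_C, aeval_X, map_ofNat,
      hcoe, hcoed]
    have hD : (2 * RatFunc.X * (RatFunc.X - RatFunc.C d) * (2 * RatFunc.X - RatFunc.C d)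
        : RatFunc F) ≠ 0 := mul_ne_zero (mul_ne_zero (mul_ne_zero h2' hX) hXd') h2Xd
    have hhD : h * (2 * RatFunc.X * (RatFunc.X - RatFunc.C d) * (2 * RatFunc.X - RatFunc.C d))
        = 4 * RatFunc.X ^ 4 - 12 * RatFunc.C d ^ 2 * RatFunc.X ^ 2
          + 8 * RatFunc.C d ^ 3 * RatFunc.X - RatFunc.C d ^ 4 := by
      rw [hh]; exact div_mul_cancel₀ _ hD
    linear_combination -hhD
  have hint : IsIntegral K (RatFunc.X : RatFunc F) := IsAlgebraic.isIntegral ⟨P, hP0, haeval⟩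
  have htop : IntermediateField.adjoin K {(RatFunc.X : RatFunc F)} = ⊤ := by
    rw [eq_top_iff]
    intro r _
    have hXmem : (RatFunc.X : RatFunc F) ∈ IntermediateField.adjoin K {(RatFunc.X : RatFunc F)} :=
      IntermediateField.mem_adjoin_simple_self K _
    have hpolymem : ∀ p : Polynomial F,
        algebraMap (Polynomial F) (RatFunc F) p
          ∈ IntermediateField.adjoin K {(RatFunc.X : RatFunc F)} := by
      intro p
      induction p using Polynomial.induction_on' with
      | add p q hp hq => rw [map_add]; exact add_mem hp hq
      | monomial n a =>
        rw [← Polynomial.C_mul_X_pow_eq_monomial, map_mul, map_pow,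
          RatFunc.algebraMap_C, RatFunc.algebraMap_X]
        refine mul_mem ?_ (pow_mem hXmem n)
        have : RatFunc.C a = algebraMap K (RatFunc F) (algebraMap F K a) := by
          rw [← IsScalarTower.algebraMap_apply, RatFunc.algebraMap_eq_C]
        rw [this]
        exact IntermediateField.algebraMap_mem _ _
    rw [← RatFunc.num_div_denom r]
    exact div_mem (hpolymem _) (hpolymem _)
  have hfdAdj : FiniteDimensional K ↥(IntermediateField.adjoin K {(RatFunc.X : RatFunc F)}) :=
    IntermediateField.adjoin.finiteDimensional hint
  rw [htop] at hfdAdj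
  haveI hfd : FiniteDimensional K (RatFunc F) :=
    (IntermediateField.topEquiv (F := K) (E := RatFunc F)).toLinearEquiv.finiteDimensional
  have hfr4 : Module.finrank K (RatFunc F) ≤ 4 := by
    have h1 : Module.finrank K ↥(IntermediateField.adjoin K {(RatFunc.X : RatFunc F)})
        = (minpoly K (RatFunc.X : RatFunc F)).natDegree :=
      IntermediateField.adjoin.finrank hint
    rw [htop, IntermediateField.finrank_top'] at h1
    rw [h1]
    have hdegP : P.degree ≤ 4 := by
      rw [hP]
      compute_degree
    have hmindeg := minpoly.degree_le_of_ne_zero K (RatFunc.X : RatFunc F) hP0 haeval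
    have : (minpoly K (RatFunc.X : RatFunc F)).degree ≤ 4 := le_trans hmindeg hdegP
    exact_mod_cast Polynomial.natDegree_le_iff_degree_le.mpr this
  -- conclude
  have heq : K = IntermediateField.fixedField (Subgroup.zpowers σ) := by
    apply IntermediateField.eq_of_le_of_finrank_le' hfixle
    rw [hLrank]
    exact hfr4
  refine ⟨?_, ?_, horder, heq.symm⟩
  · rw [heq]
    exact hGal
  · rw [heq]
    exact hLrank
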